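/- Suppose d = 2 and D = Δ^{p_1} × ⋯ × Δ^{p_τ} is a product of simplices. For each simplex i set w̃_{i,j} = w^1_{i,j} − w^2_{i,j} for j = 1,…,p_i, and assume the indices are relabeled so that w̃_{i,1} ≤ ⋯ ≤ w̃_{i,p_i}. Write z = z_1 and z_2 = 1 − z. Then for every (x, y, z) with x ∈ D and z ∈ [0,1], the following two conditions are equivalent: (a) for every α ∈ ℝ^η, y ≤ α · x + Σ_{k=1}^2 ( max_{x' ∈ D} (w^k − α) · x' + b^k ) z_k; (b) for every mapping J : {1,…,τ} → ℤ with J(i) ∈ {1,…,p_i} for all i, y ≤ Σ_{i=1}^τ ( w̃_{i,J(i)} z + Σ_{j = J(i)+1}^{p_i} (w̃_{i,j} − w̃_{i,J(i)}) x_{i,j} + Σ_{j=1}^{p_i} w^2_{i,j} x_{i,j} ) + (b^1 − b^2) z + b^2. -/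

import Mathlib

noncomputable section

/-- The product of simplices `Δ^{p₁} × ⋯ × Δ^{p_τ}`, with coordinates indexed by pairs
`(i, j)` where `i : Fin τ` and `j : Fin (p i)`. -/
def Dprod {τ : ℕ} (p : Fin τ → ℕ) : Set ((Σ i : Fin τ, Fin (p i)) → ℝ) :=
  {x | ∀ i : Fin τ, (fun j : Fin (p i) => x ⟨i, j⟩) ∈ stdSimplex ℝ (Fin (p i))}

lemma sumSigma {τ : ℕ} {p : Fin τ → ℕ} (f : (Σ i : Fin τ, Fin (p i)) → ℝ) :
    ∑ q, f q = ∑ i, ∑ j, f ⟨i, j⟩ := by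
  rw [← Finset.univ_sigma_univ, Finset.sum_sigma]

lemma simplex_sum_le {n : ℕ} (ne : (Finset.univ : Finset (Fin n)).Nonempty)
    (c x : Fin n → ℝ) (hx0 : ∀ j, 0 ≤ x j) (hx1 : ∑ j, x j = 1) :
    ∑ j, c j * x j ≤ Finset.univ.sup' ne c := by
  calc ∑ j, c j * x j ≤ ∑ j, Finset.univ.sup' ne c * x j := by
        apply Finset.sum_le_sum
        intro j _
        exact mul_le_mul_of_nonneg_right (Finset.le_sup' c (Finset.mem_univ j)) (hx0 j)
    _ = Finset.univ.sup' ne c := by rw [← Finset.mul_sum, hx1, mul_one]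

lemma lemA {τ : ℕ} {p : Fin τ → ℕ} (hp : ∀ i, 1 ≤ p i)
    (c : (Σ i : Fin τ, Fin (p i)) → ℝ) :
    sSup ((fun x' => ∑ q, c q * x' q) '' Dprod p)
      = ∑ i, Finset.univ.sup' ⟨⟨0, hp i⟩, Finset.mem_univ _⟩ (fun j : Fin (p i) => c ⟨i, j⟩) := by
  have hne : ∀ i : Fin τ, ((Finset.univ : Finset (Fin (p i)))).Nonempty :=
    fun i => ⟨⟨0, hp i⟩, Finset.mem_univ _⟩
  have hch : ∀ i : Fin τ, ∃ j : Fin (p i),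
      Finset.univ.sup' (hne i) (fun j : Fin (p i) => c ⟨i, j⟩) = c ⟨i, j⟩ := by
    intro i
    obtain ⟨j, _, hj⟩ := Finset.exists_mem_eq_sup' (hne i) (fun j : Fin (p i) => c ⟨i, j⟩)
    exact ⟨j, hj⟩
  choose js hjs using hch
  set xv : (Σ i : Fin τ, Fin (p i)) → ℝ := fun q => if q.2 = js q.1 then 1 else 0 with hxv
  have hxvD : xv ∈ Dprod p := by
    intro i
    constructor
    · intro j
      simp only [hxv]
      split <;> norm_num
    · simp [hxv]
  have hub : ∀ v ∈ (fun x' => ∑ q, c q * x' q) '' Dprod p,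
      v ≤ ∑ i, Finset.univ.sup' (hne i) (fun j : Fin (p i) => c ⟨i, j⟩) := by
    rintro v ⟨x', hx', rfl⟩
    simp only
    rw [sumSigma (fun q => c q * x' q)]
    apply Finset.sum_le_sum
    intro i _
    exact simplex_sum_le (hne i) _ _ (hx' i).1 (hx' i).2
  have hmem : (∑ i, Finset.univ.sup' (hne i) (fun j : Fin (p i) => c ⟨i, j⟩))
      ∈ (fun x' => ∑ q, c q * x' q) '' Dprod p := by
    refine ⟨xv, hxvD, ?_⟩
    simp only
    rw [sumSigma (fun q => c q * xv q)]
    apply Finset.sum_congr rfl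
    intro i _
    simp only [hxv]
    rw [Finset.sum_congr rfl (fun j _ => (mul_ite _ _ _ _ : c ⟨i, j⟩ * _ = _))]
    simp [Finset.sum_ite_eq', hjs]
  exact le_antisymm (csSup_le ⟨_, hmem⟩ hub) (le_csSup ⟨_, hub⟩ hmem)

lemma step1 {n : ℕ} (w : Fin n → ℝ) (hw : Monotone w) (J : Fin n) (x : Fin n → ℝ) :
    ∑ j ∈ Finset.univ.filter (fun j => J < j), (w j - w J) * x j
      = ∑ j, max (w j - w J) 0 * x j := by
  rw [Finset.sum_filter]
  apply Finset.sum_congr rfl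
  intro j _
  by_cases h : J < j
  · rw [if_pos h, max_eq_left (sub_nonneg.mpr (hw h.le))]
  · rw [if_neg h, max_eq_right (sub_nonpos.mpr (hw (not_lt.mp h))), zero_mul]

lemma lemB {n : ℕ} (ne : (Finset.univ : Finset (Fin n)).Nonempty)
    (w β x : Fin n → ℝ) (hw : Monotone w)
    (hx0 : ∀ j, 0 ≤ x j) (hx1 : ∑ j, x j = 1)
    (z : ℝ) (hz0 : 0 ≤ z) (hz1 : z ≤ 1) :
    ∃ J : Fin n,
      w J * z + ∑ j ∈ Finset.univ.filter (fun j => J < j), (w j - w J) * x j + ∑ j, β j * x j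
        ≤ (Finset.univ.sup' ne (fun j => β j + w j)) * z + (Finset.univ.sup' ne β) * (1 - z) := by
  set M1 := Finset.univ.sup' ne (fun j => β j + w j) with hM1
  set M2 := Finset.univ.sup' ne β with hM2
  set t := M1 - M2 with ht
  have step2 : ∃ J : Fin n, w J * z + ∑ j, max (w j - w J) 0 * x j
      ≤ t * z + ∑ j, max (w j - t) 0 * x j := by
    by_cases hS : ∃ j, w j ≤ t
    · set S := Finset.univ.filter (fun j => w j ≤ t) with hSdef
      have hSne : S.Nonempty := by
        obtain ⟨j, hj⟩ := hS
        exact ⟨j, by simp [hSdef, hj]⟩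
      set J := S.max' hSne with hJdef
      have hJt : w J ≤ t := by
        have := S.max'_mem hSne
        simp only [hSdef, Finset.mem_filter] at this
        exact this.2
      have hgt : ∀ j, J < j → t < w j := by
        intro j hj
        by_contra h
        push_neg at h
        have hm : j ∈ S := by simp [hSdef, h]
        exact absurd (S.le_max' j hm) (not_le.mpr hj)
      set F := Finset.univ.filter (fun j => J < j) with hF
      set Sx := ∑ j ∈ F, x j with hSx
      have hSx0 : 0 ≤ Sx := Finset.sum_nonneg fun j _ => hx0 j
      have hexp : ∀ c : ℝ, ∑ j ∈ F, (w j - c) * x j = (∑ j ∈ F, w j * x j) - c * Sx := by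
        intro c
        simp only [sub_mul, Finset.sum_sub_distrib, ← Finset.mul_sum, hSx]
      have hR : ∑ j ∈ F, (w j - t) * x j ≤ ∑ j, max (w j - t) 0 * x j := by
        calc ∑ j ∈ F, (w j - t) * x j ≤ ∑ j ∈ F, max (w j - t) 0 * x j := by
              apply Finset.sum_le_sum
              intro j _
              exact mul_le_mul_of_nonneg_right (le_max_left _ _) (hx0 j)
          _ ≤ ∑ j, max (w j - t) 0 * x j := by
              apply Finset.sum_le_sum_of_subset_of_nonneg
                (by rw [hF]; exact Finset.filter_subset _ _)
              intro j _ _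
              exact mul_nonneg (le_max_right _ _) (hx0 j)
      by_cases hzx : Sx ≤ z
      · refine ⟨J, ?_⟩
        rw [← step1 w hw J x]
        refine le_trans ?_ (by linarith [hR] : t * z + ∑ j ∈ F, (w j - t) * x j
          ≤ t * z + ∑ j, max (w j - t) 0 * x j)
        rw [hexp, hexp]
        nlinarith [hJt, hzx]
      · push_neg at hzx
        have hFne : F.Nonempty := by
          by_contra h
          rw [Finset.not_nonempty_iff_eq_empty] at h
          have : Sx = 0 := by rw [hSx, h, Finset.sum_empty]
          linarith
        set J' := F.min' hFne with hJ'def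
        have hJ'F : J' ∈ F := F.min'_mem hFne
        have hJJ' : J < J' := by
          have := hJ'F
          rw [hF, Finset.mem_filter] at this
          exact this.2
        have htJ' : t < w J' := hgt J' hJJ'
        have hmin : ∀ j ∈ F, J' ≤ j := fun j hj => F.min'_le j hj
        refine ⟨J', ?_⟩
        have hL : ∑ j, max (w j - w J') 0 * x j = ∑ j ∈ F, (w j - w J') * x j := by
          rw [hF, Finset.sum_filter]
          apply Finset.sum_congr rfl
          intro j _
          by_cases h : J < j
          · rw [if_pos h, max_eq_left (sub_nonneg.mpr (hw (hmin j (by simp [hF, h]))))]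
          · rw [if_neg h, max_eq_right, zero_mul]
            exact sub_nonpos.mpr ((hw (not_lt.mp h)).trans (hJt.trans htJ'.le))
        rw [hL]
        refine le_trans ?_ (by linarith [hR] : t * z + ∑ j ∈ F, (w j - t) * x j
          ≤ t * z + ∑ j, max (w j - t) 0 * x j)
        rw [hexp, hexp]
        nlinarith [htJ'.le, hzx.le]
    · push_neg at hS
      refine ⟨Finset.univ.min' ne, ?_⟩
      have h1 : ∑ j, max (w j - w (Finset.univ.min' ne)) 0 * x j
          = ∑ j, (w j - w (Finset.univ.min' ne)) * x j := by
        apply Finset.sum_congr rfl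
        intro j _
        rw [max_eq_left (sub_nonneg.mpr (hw (Finset.min'_le _ j (Finset.mem_univ j))))]
      have h2 : t * z + ∑ j, (w j - t) * x j ≤ t * z + ∑ j, max (w j - t) 0 * x j := by
        gcongr with j
        · exact hx0 j
        · exact le_max_left _ _
      have h3 : ∀ c : ℝ, ∑ j, (w j - c) * x j = (∑ j, w j * x j) - c := by
        intro c
        simp only [sub_mul, Finset.sum_sub_distrib, ← Finset.mul_sum, hx1, mul_one]
      rw [h1]
      refine le_trans ?_ h2
      rw [h3, h3]
      nlinarith [(hS (Finset.univ.min' ne)).le, hz1]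
  obtain ⟨J, hJ⟩ := step2
  refine ⟨J, ?_⟩
  rw [step1 w hw J x]
  have h3 : ∑ j, max (w j - t) 0 * x j ≤ M2 - ∑ j, β j * x j := by
    have hb : ∑ j, max (w j - t) 0 * x j ≤ ∑ j, (M2 - β j) * x j := by
      apply Finset.sum_le_sum
      intro j _
      refine mul_le_mul_of_nonneg_right (max_le ?_ ?_) (hx0 j)
      · have : β j + w j ≤ M1 := Finset.le_sup' (fun j => β j + w j) (Finset.mem_univ j)
        linarith [this]
      · have : β j ≤ M2 := Finset.le_sup' β (Finset.mem_univ j)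
        linarith [this]
    calc ∑ j, max (w j - t) 0 * x j ≤ ∑ j, (M2 - β j) * x j := hb
      _ = M2 - ∑ j, β j * x j := by
          simp only [sub_mul, Finset.sum_sub_distrib, ← Finset.mul_sum, hx1, mul_one]
  have htz : t * z = M1 * z - M2 * z := by rw [ht]; ring
  nlinarith [hJ, h3]

theorem stmt10 {τ : ℕ} (hτ : 1 ≤ τ) (p : Fin τ → ℕ) (hp : ∀ i, 1 ≤ p i)
    (w1 w2 : (Σ i : Fin τ, Fin (p i)) → ℝ) (b1 b2 : ℝ)
    (hsorted : ∀ i : Fin τ, Monotone fun j : Fin (p i) => w1 ⟨i, j⟩ - w2 ⟨i, j⟩)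
    (x : (Σ i : Fin τ, Fin (p i)) → ℝ) (hx : x ∈ Dprod p)
    (z : ℝ) (hz : z ∈ Set.Icc (0 : ℝ) 1) (y : ℝ) :
    (∀ α : (Σ i : Fin τ, Fin (p i)) → ℝ,
      y ≤ ∑ q, α q * x q
        + (sSup ((fun x' => ∑ q, (w1 q - α q) * x' q) '' Dprod p) + b1) * z
        + (sSup ((fun x' => ∑ q, (w2 q - α q) * x' q) '' Dprod p) + b2) * (1 - z))
    ↔ (∀ J : (i : Fin τ) → Fin (p i),
      y ≤ ∑ i, ((w1 ⟨i, J i⟩ - w2 ⟨i, J i⟩) * z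
          + ∑ j ∈ Finset.univ.filter (fun j => J i < j),
              ((w1 ⟨i, j⟩ - w2 ⟨i, j⟩) - (w1 ⟨i, J i⟩ - w2 ⟨i, J i⟩)) * x ⟨i, j⟩
          + ∑ j, w2 ⟨i, j⟩ * x ⟨i, j⟩)
        + (b1 - b2) * z + b2) := by
  obtain ⟨hz0, hz1⟩ := hz
  constructor
  · -- (a) → (b)
    intro h J
    set m : (Σ i : Fin τ, Fin (p i)) → ℝ :=
      fun q => max ((w1 q - w2 q) - (w1 ⟨q.1, J q.1⟩ - w2 ⟨q.1, J q.1⟩)) 0 with hm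
    have key := h (fun q => w2 q + m q)
    rw [lemA hp, lemA hp] at key
    -- compute the first sup
    have s1 : ∀ i : Fin τ, Finset.univ.sup' ⟨⟨0, hp i⟩, Finset.mem_univ _⟩
        (fun j : Fin (p i) => w1 ⟨i, j⟩ - (w2 ⟨i, j⟩ + m ⟨i, j⟩))
        = w1 ⟨i, J i⟩ - w2 ⟨i, J i⟩ := by
      intro i
      apply le_antisymm
      · apply Finset.sup'_le
        intro j _
        simp only [hm]
        rcases le_total (w1 ⟨i, j⟩ - w2 ⟨i, j⟩) (w1 ⟨i, J i⟩ - w2 ⟨i, J i⟩) with hc | hc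
        · rw [max_eq_right (by linarith)]; linarith
        · rw [max_eq_left (by linarith)]; linarith
      · have hle := Finset.le_sup'
          (fun j : Fin (p i) => w1 ⟨i, j⟩ - (w2 ⟨i, j⟩ + m ⟨i, j⟩)) (Finset.mem_univ (J i))
        have hm0 : m ⟨i, J i⟩ = 0 := by simp [hm]
        replace hle : w1 ⟨i, J i⟩ - (w2 ⟨i, J i⟩ + m ⟨i, J i⟩) ≤ Finset.univ.sup' ⟨⟨0, hp i⟩, Finset.mem_univ _⟩
          (fun j : Fin (p i) => w1 ⟨i, j⟩ - (w2 ⟨i, j⟩ + m ⟨i, j⟩)) := hle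
        linarith [hle, hm0]
    have s2 : ∀ i : Fin τ, Finset.univ.sup' ⟨⟨0, hp i⟩, Finset.mem_univ _⟩
        (fun j : Fin (p i) => w2 ⟨i, j⟩ - (w2 ⟨i, j⟩ + m ⟨i, j⟩)) = 0 := by
      intro i
      apply le_antisymm
      · apply Finset.sup'_le
        intro j _
        have h0 : 0 ≤ m ⟨i, j⟩ := le_max_right _ _
        linarith
      · have hle := Finset.le_sup'
          (fun j : Fin (p i) => w2 ⟨i, j⟩ - (w2 ⟨i, j⟩ + m ⟨i, j⟩)) (Finset.mem_univ (J i))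
        have hm0 : m ⟨i, J i⟩ = 0 := by simp [hm]
        replace hle : w2 ⟨i, J i⟩ - (w2 ⟨i, J i⟩ + m ⟨i, J i⟩) ≤ Finset.univ.sup' ⟨⟨0, hp i⟩, Finset.mem_univ _⟩
          (fun j : Fin (p i) => w2 ⟨i, j⟩ - (w2 ⟨i, j⟩ + m ⟨i, j⟩)) := hle
        linarith [hle, hm0]
    rw [Finset.sum_congr rfl (fun i _ => s1 i), Finset.sum_congr rfl (fun i _ => s2 i),
      Finset.sum_const, smul_zero] at key
    -- rewrite the α·x term
    have h4 : ∑ q, (w2 q + m q) * x q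
        = (∑ i, ∑ j, w2 ⟨i, j⟩ * x ⟨i, j⟩)
          + ∑ i, ∑ j ∈ Finset.univ.filter (fun j => J i < j),
              ((w1 ⟨i, j⟩ - w2 ⟨i, j⟩) - (w1 ⟨i, J i⟩ - w2 ⟨i, J i⟩)) * x ⟨i, j⟩ := by
      rw [sumSigma (fun q => (w2 q + m q) * x q), ← Finset.sum_add_distrib]
      apply Finset.sum_congr rfl
      intro i _
      rw [step1 (fun j : Fin (p i) => w1 ⟨i, j⟩ - w2 ⟨i, j⟩) (hsorted i) (J i)
        (fun j => x ⟨i, j⟩), ← Finset.sum_add_distrib]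
      apply Finset.sum_congr rfl
      intro j _
      simp only [hm]
      ring
    rw [h4] at key
    -- massage the goal
    have hG : ∑ i, ((w1 ⟨i, J i⟩ - w2 ⟨i, J i⟩) * z
          + ∑ j ∈ Finset.univ.filter (fun j => J i < j),
              ((w1 ⟨i, j⟩ - w2 ⟨i, j⟩) - (w1 ⟨i, J i⟩ - w2 ⟨i, J i⟩)) * x ⟨i, j⟩
          + ∑ j, w2 ⟨i, j⟩ * x ⟨i, j⟩) + (b1 - b2) * z + b2
        = (∑ i, ∑ j, w2 ⟨i, j⟩ * x ⟨i, j⟩)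
          + (∑ i, ∑ j ∈ Finset.univ.filter (fun j => J i < j),
              ((w1 ⟨i, j⟩ - w2 ⟨i, j⟩) - (w1 ⟨i, J i⟩ - w2 ⟨i, J i⟩)) * x ⟨i, j⟩)
          + (∑ i, (w1 ⟨i, J i⟩ - w2 ⟨i, J i⟩)) * z + (b1 - b2) * z + b2 := by
      rw [Finset.sum_add_distrib, Finset.sum_add_distrib, Finset.sum_mul]
      ring
    rw [hG]
    have e1 : ((∑ i, (w1 ⟨i, J i⟩ - w2 ⟨i, J i⟩)) + b1) * z
        = (∑ i, (w1 ⟨i, J i⟩ - w2 ⟨i, J i⟩)) * z + b1 * z := add_mul _ _ _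
    have e2 : ((0 : ℝ) + b2) * (1 - z) = b2 - b2 * z := by ring
    linarith [key, e1, e2]
  · -- (b) → (a)
    intro h α
    rw [lemA hp, lemA hp]
    have hJex : ∀ i : Fin τ, ∃ Ji : Fin (p i),
        (w1 ⟨i, Ji⟩ - w2 ⟨i, Ji⟩) * z
          + ∑ j ∈ Finset.univ.filter (fun j => Ji < j),
              ((w1 ⟨i, j⟩ - w2 ⟨i, j⟩) - (w1 ⟨i, Ji⟩ - w2 ⟨i, Ji⟩)) * x ⟨i, j⟩
          + ∑ j, (w2 ⟨i, j⟩ - α ⟨i, j⟩) * x ⟨i, j⟩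
        ≤ (Finset.univ.sup' ⟨⟨0, hp i⟩, Finset.mem_univ _⟩
            (fun j : Fin (p i) => (w2 ⟨i, j⟩ - α ⟨i, j⟩) + (w1 ⟨i, j⟩ - w2 ⟨i, j⟩))) * z
          + (Finset.univ.sup' ⟨⟨0, hp i⟩, Finset.mem_univ _⟩
            (fun j : Fin (p i) => w2 ⟨i, j⟩ - α ⟨i, j⟩)) * (1 - z) := by
      intro i
      exact lemB ⟨⟨0, hp i⟩, Finset.mem_univ _⟩
        (fun j : Fin (p i) => w1 ⟨i, j⟩ - w2 ⟨i, j⟩)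
        (fun j : Fin (p i) => w2 ⟨i, j⟩ - α ⟨i, j⟩)
        (fun j : Fin (p i) => x ⟨i, j⟩) (hsorted i) (hx i).1 (hx i).2 z hz0 hz1
    choose J hJ using hJex
    -- fix the first sup to match the goal
    have hfix : ∀ i : Fin τ,
        (fun j : Fin (p i) => (w2 ⟨i, j⟩ - α ⟨i, j⟩) + (w1 ⟨i, j⟩ - w2 ⟨i, j⟩))
          = fun j : Fin (p i) => w1 ⟨i, j⟩ - α ⟨i, j⟩ := by
      intro i
      funext j
      ring
    have hJ' : ∀ i : Fin τ,
        (w1 ⟨i, J i⟩ - w2 ⟨i, J i⟩) * z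
          + ∑ j ∈ Finset.univ.filter (fun j => J i < j),
              ((w1 ⟨i, j⟩ - w2 ⟨i, j⟩) - (w1 ⟨i, J i⟩ - w2 ⟨i, J i⟩)) * x ⟨i, j⟩
          + ∑ j, (w2 ⟨i, j⟩ - α ⟨i, j⟩) * x ⟨i, j⟩
        ≤ (Finset.univ.sup' ⟨⟨0, hp i⟩, Finset.mem_univ _⟩
            (fun j : Fin (p i) => w1 ⟨i, j⟩ - α ⟨i, j⟩)) * z
          + (Finset.univ.sup' ⟨⟨0, hp i⟩, Finset.mem_univ _⟩
            (fun j : Fin (p i) => w2 ⟨i, j⟩ - α ⟨i, j⟩)) * (1 - z) := by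
      intro i
      have := hJ i
      rw [hfix i] at this
      exact this
    have hsum := Finset.sum_le_sum (fun i _ => hJ' i) (s := Finset.univ)
    have hb := h J
    -- relate the two sums
    have eT : ∑ i, ((w1 ⟨i, J i⟩ - w2 ⟨i, J i⟩) * z
          + ∑ j ∈ Finset.univ.filter (fun j => J i < j),
              ((w1 ⟨i, j⟩ - w2 ⟨i, j⟩) - (w1 ⟨i, J i⟩ - w2 ⟨i, J i⟩)) * x ⟨i, j⟩
          + ∑ j, w2 ⟨i, j⟩ * x ⟨i, j⟩)
        = ∑ i, ((w1 ⟨i, J i⟩ - w2 ⟨i, J i⟩) * z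
          + ∑ j ∈ Finset.univ.filter (fun j => J i < j),
              ((w1 ⟨i, j⟩ - w2 ⟨i, j⟩) - (w1 ⟨i, J i⟩ - w2 ⟨i, J i⟩)) * x ⟨i, j⟩
          + ∑ j, (w2 ⟨i, j⟩ - α ⟨i, j⟩) * x ⟨i, j⟩) + ∑ q, α q * x q := by
      rw [sumSigma (fun q => α q * x q), ← Finset.sum_add_distrib]
      apply Finset.sum_congr rfl
      intro i _
      have : ∑ j, (w2 ⟨i, j⟩ - α ⟨i, j⟩) * x ⟨i, j⟩ + ∑ j, α ⟨i, j⟩ * x ⟨i, j⟩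
          = ∑ j, w2 ⟨i, j⟩ * x ⟨i, j⟩ := by
        rw [← Finset.sum_add_distrib]
        apply Finset.sum_congr rfl
        intro j _
        ring
      linarith [this]
    have eR : ∑ i, ((Finset.univ.sup' ⟨⟨0, hp i⟩, Finset.mem_univ _⟩
            (fun j : Fin (p i) => w1 ⟨i, j⟩ - α ⟨i, j⟩)) * z
          + (Finset.univ.sup' ⟨⟨0, hp i⟩, Finset.mem_univ _⟩
            (fun j : Fin (p i) => w2 ⟨i, j⟩ - α ⟨i, j⟩)) * (1 - z))
        = (∑ i, Finset.univ.sup' ⟨⟨0, hp i⟩, Finset.mem_univ _⟩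
            (fun j : Fin (p i) => w1 ⟨i, j⟩ - α ⟨i, j⟩)) * z
          + (∑ i, Finset.univ.sup' ⟨⟨0, hp i⟩, Finset.mem_univ _⟩
            (fun j : Fin (p i) => w2 ⟨i, j⟩ - α ⟨i, j⟩)) * (1 - z) := by
      rw [Finset.sum_add_distrib, Finset.sum_mul, Finset.sum_mul]
    have g1 : ((∑ i, Finset.univ.sup' ⟨⟨0, hp i⟩, Finset.mem_univ _⟩
            (fun j : Fin (p i) => w1 ⟨i, j⟩ - α ⟨i, j⟩)) + b1) * z
        = (∑ i, Finset.univ.sup' ⟨⟨0, hp i⟩, Finset.mem_univ _⟩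
            (fun j : Fin (p i) => w1 ⟨i, j⟩ - α ⟨i, j⟩)) * z + b1 * z := add_mul _ _ _
    have g2 : ((∑ i, Finset.univ.sup' ⟨⟨0, hp i⟩, Finset.mem_univ _⟩
            (fun j : Fin (p i) => w2 ⟨i, j⟩ - α ⟨i, j⟩)) + b2) * (1 - z)
        = (∑ i, Finset.univ.sup' ⟨⟨0, hp i⟩, Finset.mem_univ _⟩
            (fun j : Fin (p i) => w2 ⟨i, j⟩ - α ⟨i, j⟩)) * (1 - z) + (b2 - b2 * z) := by
      ring
    have g3 : (b1 - b2) * z = b1 * z - b2 * z := by ring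
    linarith [hb, hsum, eT, eR, g1, g2, g3]
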